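/- arXiv:2005.13574 — 3 statements merged into one kernel-verified Lean document; each statement's English description precedes it below -/
import Mathlib

section
/- The Kashaev–Korepanov–Sergeev star-triangle map T(x,y,z) = (xy/(x+z+xyz), x+z+xyz, yz/(x+z+xyz)) satisfies the functional tetrahedron equation T^{123} ∘ T^{145} ∘ T^{246} ∘ T^{356} = T^{356} ∘ T^{246} ∘ T^{145} ∘ T^{123} on the open subset of ℂ^6 where all denominators are nonzero. -/
/- STATEMENT 0: The Kashaev–Korepanov–Sergeev star-triangle map satisfies
the functional tetrahedron equation on the open subset of ℂ⁶ where all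
denominators are nonzero. -/

/-- The star-triangle map `T(x,y,z) = (xy/d, d, yz/d)` with `d = x+z+xyz`. -/
noncomputable def starTriangle (x y z : ℂ) : ℂ × ℂ × ℂ :=
  (x * y / (x + z + x * y * z), x + z + x * y * z, y * z / (x + z + x * y * z))

/-- Denominator nonvanishing condition for one application of the map. -/
def stOk (x y z : ℂ) : Prop := x + z + x * y * z ≠ 0

abbrev V6 := ℂ × ℂ × ℂ × ℂ × ℂ × ℂ

noncomputable def T123 (v : V6) : V6 :=
  let t := starTriangle v.1 v.2.1 v.2.2.1
  (t.1, t.2.1, t.2.2, v.2.2.2.1, v.2.2.2.2.1, v.2.2.2.2.2)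

noncomputable def T145 (v : V6) : V6 :=
  let t := starTriangle v.1 v.2.2.2.1 v.2.2.2.2.1
  (t.1, v.2.1, v.2.2.1, t.2.1, t.2.2, v.2.2.2.2.2)

noncomputable def T246 (v : V6) : V6 :=
  let t := starTriangle v.2.1 v.2.2.2.1 v.2.2.2.2.2
  (v.1, t.1, v.2.2.1, t.2.1, v.2.2.2.2.1, t.2.2)

noncomputable def T356 (v : V6) : V6 :=
  let t := starTriangle v.2.2.1 v.2.2.2.2.1 v.2.2.2.2.2
  (v.1, v.2.1, t.1, v.2.2.2.1, t.2.1, t.2.2)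

def ok123 (v : V6) : Prop := stOk v.1 v.2.1 v.2.2.1
def ok145 (v : V6) : Prop := stOk v.1 v.2.2.2.1 v.2.2.2.2.1
def ok246 (v : V6) : Prop := stOk v.2.1 v.2.2.2.1 v.2.2.2.2.2
def ok356 (v : V6) : Prop := stOk v.2.2.1 v.2.2.2.2.1 v.2.2.2.2.2


set_option maxHeartbeats 1000000 in
private lemma key (x y z r s t a b p q m : ℂ)
    (ha : a = z + t + z * s * t) (hb : b = x + z + x * y * z)
    (hp : p = y * a + s * t + y * r * s * t)
    (hq : q = x * y + s * b + x * y * r * s)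
    (hm : m = x + a + x * p)
    (ha0 : a ≠ 0) (hb0 : b ≠ 0) (hp0 : p ≠ 0) (hq0 : q ≠ 0) (hm0 : m ≠ 0) :
    T123 (T145 (T246 (T356 (x, y, z, r, s, t)))) =
      T356 (T246 (T145 (T123 (x, y, z, r, s, t)))) := by
  have key1 : x * p + z * s * m + x * y * r * (z * s) = a * q := by
    rw [hm, hp, hq, ha, hb]; ring
  have hm' : m = b + t + q * t := by rw [hm, hp, hq, ha, hb]; ring
  have key2 : y * z * m + q * t + y * z * (r * s * t) = b * p := by
    rw [hm, hp, hq, ha, hb]; ring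
  have L1 : T356 (x, y, z, r, s, t) = (x, y, z * s / a, r, a, s * t / a) := by
    rw [ha]; rfl
  have L2 : T246 (x, y, z * s / a, r, a, s * t / a)
      = (x, y * r * a / p, z * s / a, p / a, a, r * s * t / p) := by
    simp only [T246, starTriangle]
    have ec : y + s * t / a + y * r * (s * t / a) = p / a := by
      rw [hp]; first | (field_simp; ring1) | field_simp
    rw [ec]
    refine Prod.ext ?_ (Prod.ext ?_ (Prod.ext ?_ (Prod.ext ?_ (Prod.ext ?_ ?_)))) <;>
      simp only <;> first | rfl | (field_simp; ring1) | field_simp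
  have L3 : T145 (x, y * r * a / p, z * s / a, p / a, a, r * s * t / p)
      = (x * p / (a * m), y * r * a / p, z * s / a, m, p / m, r * s * t / p) := by
    simp only [T145, starTriangle]
    have ec : x + a + x * (p / a) * a = m := by
      rw [hm]; first | (field_simp; ring1) | field_simp
    rw [ec]
    refine Prod.ext ?_ (Prod.ext ?_ (Prod.ext ?_ (Prod.ext ?_ (Prod.ext ?_ ?_)))) <;>
      simp only <;> first | rfl | (field_simp; ring1) | field_simp
  have L4 : T123 (x * p / (a * m), y * r * a / p, z * s / a, m, p / m, r * s * t / p)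
      = (x * y * r / q, q / m, y * r * z * s * m / (p * q), m, p / m, r * s * t / p) := by
    simp only [T123, starTriangle]
    have ec : x * p / (a * m) + z * s / a + x * p / (a * m) * (y * r * a / p) * (z * s / a)
        = a * q / (a * m) := by
      rw [div_mul_div_comm, div_mul_div_comm,
        div_add_div _ _ (mul_ne_zero ha0 hm0) ha0,
        div_add_div _ _ (mul_ne_zero (mul_ne_zero ha0 hm0) ha0)
          (mul_ne_zero (mul_ne_zero (mul_ne_zero ha0 hm0) hp0) ha0),
        div_eq_div_iff (mul_ne_zero (mul_ne_zero (mul_ne_zero ha0 hm0) ha0)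
          (mul_ne_zero (mul_ne_zero (mul_ne_zero ha0 hm0) hp0) ha0)) (mul_ne_zero ha0 hm0)]
      linear_combination (a^4 * m^2 * p) * key1
    rw [ec]
    refine Prod.ext ?_ (Prod.ext ?_ (Prod.ext ?_ (Prod.ext ?_ (Prod.ext ?_ ?_)))) <;>
      simp only <;> first | rfl | (field_simp; ring1) | field_simp
  have R1 : T123 (x, y, z, r, s, t) = (x * y / b, b, y * z / b, r, s, t) := by
    rw [hb]; rfl
  have R2 : T145 (x * y / b, b, y * z / b, r, s, t)
      = (x * y * r / q, b, y * z / b, q / b, r * s * b / q, t) := by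
    simp only [T145, starTriangle]
    have ec : x * y / b + s + x * y / b * r * s = q / b := by
      rw [hq]; first | (field_simp; ring1) | field_simp
    rw [ec]
    refine Prod.ext ?_ (Prod.ext ?_ (Prod.ext ?_ (Prod.ext ?_ (Prod.ext ?_ ?_)))) <;>
      simp only <;> first | rfl | (field_simp; ring1) | field_simp
  have R3 : T246 (x * y * r / q, b, y * z / b, q / b, r * s * b / q, t)
      = (x * y * r / q, q / m, y * z / b, m, r * s * b / q, q * t / (b * m)) := by
    simp only [T246, starTriangle]
    have ec : b + t + b * (q / b) * t = m := by
      rw [hm']; first | (field_simp; ring1) | field_simp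
    rw [ec]
    refine Prod.ext ?_ (Prod.ext ?_ (Prod.ext ?_ (Prod.ext ?_ (Prod.ext ?_ ?_)))) <;>
      simp only <;> first | rfl | (field_simp; ring1) | field_simp
  have R4 : T356 (x * y * r / q, q / m, y * z / b, m, r * s * b / q, q * t / (b * m))
      = (x * y * r / q, q / m, y * r * z * s * m / (p * q), m, p / m, r * s * t / p) := by
    simp only [T356, starTriangle]
    have ec : y * z / b + q * t / (b * m) + y * z / b * (r * s * b / q) * (q * t / (b * m))
        = b * p / (b * m) := by
      rw [div_mul_div_comm, div_mul_div_comm,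
        div_add_div _ _ hb0 (mul_ne_zero hb0 hm0),
        div_add_div _ _ (mul_ne_zero hb0 (mul_ne_zero hb0 hm0))
          (mul_ne_zero (mul_ne_zero hb0 hq0) (mul_ne_zero hb0 hm0)),
        div_eq_div_iff (mul_ne_zero (mul_ne_zero hb0 (mul_ne_zero hb0 hm0))
          (mul_ne_zero (mul_ne_zero hb0 hq0) (mul_ne_zero hb0 hm0))) (mul_ne_zero hb0 hm0)]
      linear_combination (b^4 * m^2 * q) * key2
    rw [ec]
    refine Prod.ext ?_ (Prod.ext ?_ (Prod.ext ?_ (Prod.ext ?_ (Prod.ext ?_ ?_)))) <;>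
      simp only <;> first | rfl | (field_simp; ring1) | field_simp
  rw [L1, L2, L3, L4, R1, R2, R3, R4]

set_option maxHeartbeats 1000000 in
theorem star_triangle_tetrahedron (v : V6)
    (h1 : ok356 v) (h2 : ok246 (T356 v)) (h3 : ok145 (T246 (T356 v)))
    (h4 : ok123 (T145 (T246 (T356 v))))
    (h1' : ok123 v) (h2' : ok145 (T123 v)) (h3' : ok246 (T145 (T123 v)))
    (h4' : ok356 (T246 (T145 (T123 v)))) :
    T123 (T145 (T246 (T356 v))) = T356 (T246 (T145 (T123 v))) := by
  obtain ⟨x, y, z, r, s, t⟩ := v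
  simp only [ok123, ok145, ok246, ok356, stOk, T123, T145, T246, T356, starTriangle]
    at h1 h2 h3 h1' h2'
  have hd1 : z + t + z * s * t ≠ 0 := h1
  have he1 : x + z + x * y * z ≠ 0 := h1'
  have hD2 : y * (z + t + z * s * t) + s * t + y * r * s * t ≠ 0 := by
    intro hz; apply h2; generalize z + t + z * s * t = a at hd1 hz ⊢; field_simp; linear_combination hz
  have hE2 : x * y + s * (x + z + x * y * z) + x * y * r * s ≠ 0 := by
    intro hz; apply h2'; field_simp; linear_combination hz
  have hD3 : x + (z + t + z * s * t)
      + x * (y * (z + t + z * s * t) + s * t + y * r * s * t) ≠ 0 := by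
    intro hz; apply h3; generalize z + t + z * s * t = a at hd1 hz ⊢; field_simp; linear_combination hz
  exact key x y z r s t _ _ _ _ _ rfl rfl rfl rfl rfl hd1 he1 hD2 hE2 hD3
end

section
/- The parametric six-dimensional NLS map T_{a,b,c} (defined in the previous context) admits the invariants I₁ = (a+x₁x₂)(b+y₁y₂), I₂ = (b+y₁y₂)(c+z₁z₂), and I₃ = a y₁y₂ + (x₂y₁+z₁)(x₁y₂+z₂): i.e. if (u₁,u₂,v₁,v₂,w₁,w₂) = T_{a,b,c}(x₁,x₂,y₁,y₂,z₁,z₂), then (a+u₁u₂)(b+v₁v₂) = (a+x₁x₂)(b+y₁y₂), (b+v₁v₂)(c+w₁w₂) = (b+y₁y₂)(c+z₁z₂), and a v₁v₂ + (u₂v₁+w₁)(u₁v₂+w₂) = a y₁y₂ + (x₂y₁+z₁)(x₁y₂+z₂). -/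
set_option linter.unusedVariables false
set_option maxHeartbeats 4000000

lemma nls6d_frac_lemma (c E X N M R : ℂ) (hc : c ≠ 0) (hE : E ≠ 0)
    (h : X*E + N*M = c*E*R) : X/c + (N/E)*(M/c) = R := by
  field_simp
  linear_combination h

/- STATEMENT 6: Invariants of the six-dimensional parametric NLS map. -/

/-- The denominator E of the six-dimensional parametric NLS map. -/
noncomputable def En (a b c x1 x2 y1 y2 z1 z2 : ℂ) : ℂ :=
  a*b*c - (x2*z2 + y2*(a+x1*x2))*(b*x1*z1 - y1*(c+z1*z2))

noncomputable def u1f (a b c x1 x2 y1 y2 z1 z2 : ℂ) : ℂ := (b*x1 - y1*z2)/c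
noncomputable def u2f (a b c x1 x2 y1 y2 z1 z2 : ℂ) : ℂ :=
  a*c*(x2*(c+z1*z2) + y2*z1*(a+x1*x2))/(En a b c x1 x2 y1 y2 z1 z2)
noncomputable def v1f (a b c x1 x2 y1 y2 z1 z2 : ℂ) : ℂ :=
  (y1*(c+z1*z2) - b*x1*z1)/(a*c)
noncomputable def v2f (a b c x1 x2 y1 y2 z1 z2 : ℂ) : ℂ :=
  x2*z2 + y2*(a+x1*x2)
noncomputable def w1f (a b c x1 x2 y1 y2 z1 z2 : ℂ) : ℂ :=
  c*(b*z1*(a+x1*x2) - x2*y1*(c+z1*z2))/(En a b c x1 x2 y1 y2 z1 z2)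
noncomputable def w2f (a b c x1 x2 y1 y2 z1 z2 : ℂ) : ℂ := x1*y2 + z2

theorem nls6d_invariants (a b c x1 x2 y1 y2 z1 z2 : ℂ)
    (ha : a ≠ 0) (hb : b ≠ 0) (hc : c ≠ 0)
    (hE : En a b c x1 x2 y1 y2 z1 z2 ≠ 0) :
    (a + u1f a b c x1 x2 y1 y2 z1 z2 * u2f a b c x1 x2 y1 y2 z1 z2)
      * (b + v1f a b c x1 x2 y1 y2 z1 z2 * v2f a b c x1 x2 y1 y2 z1 z2)
      = (a + x1*x2) * (b + y1*y2) ∧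
    (b + v1f a b c x1 x2 y1 y2 z1 z2 * v2f a b c x1 x2 y1 y2 z1 z2)
      * (c + w1f a b c x1 x2 y1 y2 z1 z2 * w2f a b c x1 x2 y1 y2 z1 z2)
      = (b + y1*y2) * (c + z1*z2) ∧
    a * (v1f a b c x1 x2 y1 y2 z1 z2 * v2f a b c x1 x2 y1 y2 z1 z2)
      + (u2f a b c x1 x2 y1 y2 z1 z2 * v1f a b c x1 x2 y1 y2 z1 z2
          + w1f a b c x1 x2 y1 y2 z1 z2)
        * (u1f a b c x1 x2 y1 y2 z1 z2 * v2f a b c x1 x2 y1 y2 z1 z2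
          + w2f a b c x1 x2 y1 y2 z1 z2)
      = a*(y1*y2) + (x2*y1 + z1)*(x1*y2 + z2) := by
  have hE' : a*b*c - (x2*z2 + y2*(a+x1*x2))*(b*x1*z1 - y1*(c+z1*z2)) ≠ 0 := by
    simpa [En] using hE
  simp only [u1f, u2f, v1f, v2f, w1f, w2f, En]
  refine ⟨by rw [div_mul_div_comm, div_mul_eq_mul_div, add_div' _ _ _ (mul_ne_zero hc hE'), add_div' _ _ _ (mul_ne_zero ha hc), div_mul_div_comm, div_eq_iff (mul_ne_zero (mul_ne_zero hc hE') (mul_ne_zero ha hc))]; ring, by rw [div_mul_eq_mul_div, div_mul_eq_mul_div, add_div' _ _ _ hE', add_div' _ _ _ (mul_ne_zero ha hc), div_mul_div_comm, div_eq_iff (mul_ne_zero (mul_ne_zero ha hc) hE')]; ring, ?_⟩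
  have e1 : a * ((y1*(c+z1*z2) - b*x1*z1)/(a*c) * (x2*z2 + y2*(a+x1*x2)))
      = ((y1*(c+z1*z2) - b*x1*z1)*(x2*z2 + y2*(a+x1*x2)))/c := by
    field_simp
  have e2 : (a*c*(x2*(c+z1*z2) + y2*z1*(a+x1*x2))/(a*b*c - (x2*z2 + y2*(a+x1*x2))*(b*x1*z1 - y1*(c+z1*z2)))) * ((y1*(c+z1*z2) - b*x1*z1)/(a*c))
          + (c*(b*z1*(a+x1*x2) - x2*y1*(c+z1*z2))/(a*b*c - (x2*z2 + y2*(a+x1*x2))*(b*x1*z1 - y1*(c+z1*z2))))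
      = ((x2*(c+z1*z2)+y2*z1*(a+x1*x2))*(y1*(c+z1*z2) - b*x1*z1) + c*(b*z1*(a+x1*x2) - x2*y1*(c+z1*z2)))
        / (a*b*c - (x2*z2 + y2*(a+x1*x2))*(b*x1*z1 - y1*(c+z1*z2))) := by
    field_simp
  have e3 : (b*x1 - y1*z2)/c * (x2*z2 + y2*(a+x1*x2)) + (x1*y2 + z2)
      = ((b*x1 - y1*z2)*(x2*z2 + y2*(a+x1*x2)) + c*(x1*y2+z2))/c := by
    field_simp
  rw [e1, e2, e3]
  exact nls6d_frac_lemma _ _ _ _ _ _ hc hE' (by ring)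
end

section
/- The six-dimensional parametric NLS map T_{a,b,c} (as above) has the Lax representation M_{12}(u₁,u₂;a) M_{13}(v₁,v₂;b) M_{23}(w₁,w₂;c) = M_{23}(z₁,z₂;c) M_{13}(y₁,y₂;b) M_{12}(x₁,x₂;a), where M(x₁,x₂;a) = [[a+x₁x₂, x₁],[x₂, 1]] and M_{ij} are its 3×3 embeddings. -/
set_option linter.unusedVariables false

noncomputable def M12 (x1 x2 a : ℂ) : Matrix (Fin 3) (Fin 3) ℂ :=
  !![a + x1*x2, x1, 0; x2, 1, 0; 0, 0, 1]
noncomputable def M13 (x1 x2 a : ℂ) : Matrix (Fin 3) (Fin 3) ℂ :=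
  !![a + x1*x2, 0, x1; 0, 1, 0; x2, 0, 1]
noncomputable def M23 (x1 x2 a : ℂ) : Matrix (Fin 3) (Fin 3) ℂ :=
  !![1, 0, 0; 0, a + x1*x2, x1; 0, x2, 1]

set_option maxHeartbeats 2000000 in
theorem nls6d_lax (a b c x1 x2 y1 y2 z1 z2 : ℂ)
    (ha : a ≠ 0) (hb : b ≠ 0) (hc : c ≠ 0)
    (hE : En a b c x1 x2 y1 y2 z1 z2 ≠ 0) :
    M12 (u1f a b c x1 x2 y1 y2 z1 z2) (u2f a b c x1 x2 y1 y2 z1 z2) a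
      * M13 (v1f a b c x1 x2 y1 y2 z1 z2) (v2f a b c x1 x2 y1 y2 z1 z2) b
      * M23 (w1f a b c x1 x2 y1 y2 z1 z2) (w2f a b c x1 x2 y1 y2 z1 z2) c
      = M23 z1 z2 c * M13 y1 y2 b * M12 x1 x2 a := by
  have hE' := hE
  unfold En at hE'
  unfold M12 M13 M23 u1f u2f v1f v2f w1f w2f
  ext i j
  fin_cases i <;> fin_cases j <;>
    simp [Matrix.mul_apply, Fin.sum_univ_succ] <;>
    (try field_simp) <;> (try unfold En) <;> (try ring)
end
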